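/- arXiv:1511.00788 — 2 statements merged into one kernel-verified Lean document; each statement's English description precedes it below -/
import Mathlib

section
/- Let A and B be associative rings with identity, f : A → B a ring homomorphism, and J a proper two-sided ideal of B. Assume J contains a regular central element of B. Then the amalgamation A⋈fJ is a nil-Armendariz ring if and only if both A and the subring f(A)+J of B are nil-Armendariz rings. -/
open Polynomial

/-- A ring `R` is Armendariz if whenever `p * q = 0` for polynomials over `R`,
every product of a coefficient of `p` with a coefficient of `q` is zero. -/
def IsArmendariz (R : Type*) [Ring R] : Prop :=
  ∀ p q : R[X], p * q = 0 → ∀ i j : ℕ, p.coeff i * q.coeff j = 0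

/-- A ring `R` is nil-Armendariz if whenever every coefficient of `p * q` is nilpotent,
every product of a coefficient of `p` with a coefficient of `q` is nilpotent. -/
def IsNilArmendariz (R : Type*) [Ring R] : Prop :=
  ∀ p q : R[X], (∀ k : ℕ, IsNilpotent ((p * q).coeff k)) →
    ∀ i j : ℕ, IsNilpotent (p.coeff i * q.coeff j)

/-- A ring `R` is weak Armendariz if whenever `p * q = 0` for polynomials over `R`,
every product of a coefficient of `p` with a coefficient of `q` is nilpotent. -/
def IsWeakArmendariz (R : Type*) [Ring R] : Prop :=
  ∀ p q : R[X], p * q = 0 → ∀ i j : ℕ, IsNilpotent (p.coeff i * q.coeff j)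

/-- The amalgamation `A ⋈^f J = {(a, f a + j) | a ∈ A, j ∈ J}` of `A` and `B` along the
two-sided ideal `J` with respect to `f`, as a subring of `A × B`.  (A pair `(a, b)` has the
form `(a, f a + j)` with `j ∈ J` iff `b - f a ∈ J`.) -/
def amalgamation {A B : Type*} [Ring A] [Ring B] (f : A →+* B) (J : TwoSidedIdeal B) :
    Subring (A × B) where
  carrier := {p | p.2 - f p.1 ∈ J}
  zero_mem' := by simp [J.zero_mem]
  one_mem' := by simp [J.zero_mem]
  add_mem' := by
    intro x y hx hy
    have e : (x + y).2 - f ((x + y).1) = (x.2 - f x.1) + (y.2 - f y.1) := by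
      simp only [Prod.snd_add, Prod.fst_add, map_add]; abel
    show (x + y).2 - f ((x + y).1) ∈ J
    rw [e]; exact J.add_mem hx hy
  neg_mem' := by
    intro x hx
    have e : (-x).2 - f ((-x).1) = -(x.2 - f x.1) := by
      simp only [Prod.snd_neg, Prod.fst_neg, map_neg]; abel
    show (-x).2 - f ((-x).1) ∈ J
    rw [e]; exact J.neg_mem hx
  mul_mem' := by
    intro x y hx hy
    have e : (x * y).2 - f ((x * y).1) = x.2 * (y.2 - f y.1) + (x.2 - f x.1) * f y.1 := by
      simp only [Prod.snd_mul, Prod.fst_mul, map_mul, mul_sub, sub_mul]; abel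
    show (x * y).2 - f ((x * y).1) ∈ J
    rw [e]; exact J.add_mem (J.mul_mem_left _ _ hy) (J.mul_mem_right _ _ hx)

/-- The subring `f(A) + J = {f a + j | a ∈ A, j ∈ J}` of `B`.  (An element `b` has the form
`f a + j` with `j ∈ J` iff `b - f a ∈ J` for some `a`.) -/
def imageAddIdeal {A B : Type*} [Ring A] [Ring B] (f : A →+* B) (J : TwoSidedIdeal B) :
    Subring B where
  carrier := {b | ∃ a : A, b - f a ∈ J}
  zero_mem' := ⟨0, by simp [J.zero_mem]⟩
  one_mem' := ⟨1, by simp [J.zero_mem]⟩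
  add_mem' := by
    rintro x y ⟨a, ha⟩ ⟨b, hb⟩
    refine ⟨a + b, ?_⟩
    have e : x + y - f (a + b) = (x - f a) + (y - f b) := by
      rw [map_add]; abel
    rw [e]; exact J.add_mem ha hb
  neg_mem' := by
    rintro x ⟨a, ha⟩
    refine ⟨-a, ?_⟩
    have e : -x - f (-a) = -(x - f a) := by rw [map_neg]; abel
    rw [e]; exact J.neg_mem ha
  mul_mem' := by
    rintro x y ⟨a, ha⟩ ⟨b, hb⟩
    refine ⟨a * b, ?_⟩
    have e : x * y - f (a * b) = x * (y - f b) + (x - f a) * f b := by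
      rw [map_mul, mul_sub, sub_mul]; abel
    rw [e]; exact J.add_mem (J.mul_mem_left _ _ hb) (J.mul_mem_right _ _ ha)


section Aux

open Function

lemma aux_subring_isNilpotent_iff {B : Type*} [Ring B] {S : Subring B} (x : S) :
    IsNilpotent x ↔ IsNilpotent (x : B) := by
  constructor
  · rintro ⟨n, hn⟩
    exact ⟨n, by exact_mod_cast congrArg (Subtype.val) hn⟩
  · rintro ⟨n, hn⟩
    exact ⟨n, Subtype.ext (by push_cast; exact hn)⟩

lemma aux_prod_isNilpotent_iff {R T : Type*} [Ring R] [Ring T] (x : R × T) :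
    IsNilpotent x ↔ IsNilpotent x.1 ∧ IsNilpotent x.2 := by
  constructor
  · rintro ⟨n, hn⟩
    exact ⟨⟨n, by rw [← Prod.pow_fst, hn]; rfl⟩, ⟨n, by rw [← Prod.pow_snd, hn]; rfl⟩⟩
  · rintro ⟨⟨n, hn⟩, ⟨m, hm⟩⟩
    refine ⟨n + m, Prod.ext ?_ ?_⟩
    · rw [Prod.pow_fst, pow_add, hn, zero_mul]; rfl
    · rw [Prod.pow_snd, pow_add, hm, mul_zero]; rfl

lemma aux_isNilArmendariz_of_injective {R T : Type*} [Ring R] [Ring T] (g : R →+* T)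
    (hg : Function.Injective g) (hT : IsNilArmendariz T) : IsNilArmendariz R := by
  intro p q h i j
  have h' : ∀ k, IsNilpotent ((p.map g * q.map g).coeff k) := by
    intro k
    rw [← Polynomial.map_mul, Polynomial.coeff_map]
    exact (h k).map g
  have hij := hT (p.map g) (q.map g) h' i j
  rw [Polynomial.coeff_map, Polynomial.coeff_map, ← map_mul] at hij
  obtain ⟨n, hn⟩ := hij
  exact ⟨n, hg (by rw [map_pow, hn, map_zero])⟩

lemma aux_isNilArmendariz_prod {R T : Type*} [Ring R] [Ring T]
    (hR : IsNilArmendariz R) (hT : IsNilArmendariz T) : IsNilArmendariz (R × T) := by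
  intro p q h i j
  rw [aux_prod_isNilpotent_iff]
  constructor
  · have := hR (p.map (RingHom.fst R T)) (q.map (RingHom.fst R T)) (fun k => by
      rw [← Polynomial.map_mul, Polynomial.coeff_map]
      exact ((h k).map (RingHom.fst R T))) i j
    rwa [Polynomial.coeff_map, Polynomial.coeff_map] at this
  · have := hT (p.map (RingHom.snd R T)) (q.map (RingHom.snd R T)) (fun k => by
      rw [← Polynomial.map_mul, Polynomial.coeff_map]
      exact ((h k).map (RingHom.snd R T))) i j
    rwa [Polynomial.coeff_map, Polynomial.coeff_map] at this

lemma aux_mem_amalgamation {A B : Type*} [Ring A] [Ring B] (f : A →+* B)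
    (J : TwoSidedIdeal B) (x : A × B) :
    x ∈ amalgamation f J ↔ x.2 - f x.1 ∈ J := Iff.rfl

lemma aux_mem_imageAddIdeal {A B : Type*} [Ring A] [Ring B] (f : A →+* B)
    (J : TwoSidedIdeal B) (b : B) :
    b ∈ imageAddIdeal f J ↔ ∃ a : A, b - f a ∈ J := Iff.rfl

/-- The additive map `b ↦ (0, s * b)` into the amalgamation, for `s ∈ J`. -/
def auxMulLeftHom {A B : Type*} [Ring A] [Ring B] (f : A →+* B) (J : TwoSidedIdeal B)
    (s : B) (hsJ : s ∈ J) : B →+ amalgamation f J where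
  toFun b := ⟨(0, s * b), by
    rw [aux_mem_amalgamation]
    simp only [map_zero, sub_zero]
    exact J.mul_mem_right s b hsJ⟩
  map_zero' := Subtype.ext (Prod.ext rfl (mul_zero s))
  map_add' x y := Subtype.ext (Prod.ext (zero_add 0).symm (mul_add s x y))

end Aux
theorem stmt_7 {A B : Type*} [Ring A] [Ring B] (f : A →+* B) (J : TwoSidedIdeal B)
    (hJ : (1 : B) ∉ J)
    (hs : ∃ s ∈ J, (∀ b : B, s * b = b * s) ∧
      (∀ b : B, s * b = 0 → b = 0) ∧ (∀ b : B, b * s = 0 → b = 0)) :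
    IsNilArmendariz (amalgamation f J) ↔ IsNilArmendariz A ∧ IsNilArmendariz (imageAddIdeal f J) := by
  obtain ⟨s, hsJ, hcomm, hl, hr⟩ := hs
  constructor
  · intro hR
    constructor
    · -- A is nil-Armendariz, via the embedding `a ↦ (a, f a)`
      refine aux_isNilArmendariz_of_injective
        ({ toFun := fun a => ⟨(a, f a), by
              rw [aux_mem_amalgamation]; simp [J.zero_mem]⟩
           map_one' := Subtype.ext (Prod.ext rfl (map_one f))
           map_mul' := fun x y => Subtype.ext (Prod.ext rfl (map_mul f x y))
           map_zero' := Subtype.ext (Prod.ext rfl (map_zero f))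
           map_add' := fun x y => Subtype.ext (Prod.ext rfl (map_add f x y)) }
          : A →+* amalgamation f J) (fun x y hxy => ?_) hR
      exact congrArg (fun z : amalgamation f J => (z : A × B).1) hxy
    · -- f(A)+J is nil-Armendariz
      intro p q h i j
      have hss : s * s ∈ J := J.mul_mem_right s s hsJ
      set ψ := auxMulLeftHom f J s hsJ with hψ
      set θ := auxMulLeftHom f J (s * s) hss with hθ
      have hψcoe : ∀ b : B, ((ψ b : A × B)) = (0, s * b) := fun b => rfl
      have hθcoe : ∀ b : B, ((θ b : A × B)) = (0, (s * s) * b) := fun b => rfl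
      -- cancellation of powers of s
      have cancel : ∀ (m : ℕ) (b : B), s ^ m * b = 0 → b = 0 := by
        intro m
        induction m with
        | zero => intro b hb; simpa using hb
        | succ m ih =>
          intro b hb
          rw [pow_succ', mul_assoc] at hb
          exact ih b (hl _ hb)
      -- key multiplicative identity
      have key : ∀ b c : B, ψ b * ψ c = θ (b * c) := by
        intro b c
        refine Subtype.ext (Prod.ext ?_ ?_)
        · show (0 : A) * 0 = 0; rw [mul_zero]
        · show (s * b) * (s * c) = (s * s) * (b * c)
          calc (s * b) * (s * c) = s * ((b * s) * c) := by rw [mul_assoc, mul_assoc]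
            _ = s * ((s * b) * c) := by rw [← hcomm b]
            _ = (s * s) * (b * c) := by rw [mul_assoc s b c, ← mul_assoc s s (b * c)]
      -- the lifted polynomials
      set φ : imageAddIdeal f J →+ amalgamation f J :=
        ψ.comp (imageAddIdeal f J).subtype.toAddMonoidHom with hφ
      set P : Polynomial (amalgamation f J) :=
        Polynomial.ofFinsupp (AddMonoidAlgebra.ofCoeff (Finsupp.mapRange φ φ.map_zero p.toFinsupp.coeff)) with hP
      set Q : Polynomial (amalgamation f J) :=
        Polynomial.ofFinsupp (AddMonoidAlgebra.ofCoeff (Finsupp.mapRange φ φ.map_zero q.toFinsupp.coeff)) with hQ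
      have hPc : ∀ n, P.coeff n = ψ ((p.coeff n : B)) := by
        intro n
        rw [hP, Polynomial.coeff_ofFinsupp, AddMonoidAlgebra.coeff_ofCoeff, Finsupp.mapRange_apply]
        rfl
      have hQc : ∀ n, Q.coeff n = ψ ((q.coeff n : B)) := by
        intro n
        rw [hQ, Polynomial.coeff_ofFinsupp, AddMonoidAlgebra.coeff_ofCoeff, Finsupp.mapRange_apply]
        rfl
      have hPQ : ∀ k, (P * Q).coeff k = θ (((p * q).coeff k : B)) := by
        intro k
        rw [Polynomial.coeff_mul, Polynomial.coeff_mul]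
        calc ∑ x ∈ Finset.HasAntidiagonal.antidiagonal k, P.coeff x.1 * Q.coeff x.2
            = ∑ x ∈ Finset.HasAntidiagonal.antidiagonal k,
                θ ((p.coeff x.1 : B) * (q.coeff x.2 : B)) := by
              refine Finset.sum_congr rfl fun x _ => ?_
              rw [hPc, hQc, key]
          _ = θ (∑ x ∈ Finset.HasAntidiagonal.antidiagonal k, (p.coeff x.1 : B) * (q.coeff x.2 : B)) :=
              (map_sum θ _ _).symm
          _ = θ (((∑ x ∈ Finset.HasAntidiagonal.antidiagonal k, p.coeff x.1 * q.coeff x.2 :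
                imageAddIdeal f J) : B)) := by push_cast; ring_nf
      have hnil : ∀ k, IsNilpotent ((P * Q).coeff k) := by
        intro k
        obtain ⟨n, hn⟩ := h k
        have hn' : (((p * q).coeff k : B)) ^ (n + 1) = 0 := by
          have := congrArg (Subtype.val) hn
          push_cast at this
          rw [pow_succ, this, zero_mul]
        rw [hPQ k, aux_subring_isNilpotent_iff]
        refine ⟨n + 1, ?_⟩
        rw [hθcoe]
        refine Prod.ext ?_ ?_
        · show ((0 : A), (s * s) * ((p * q).coeff k : B)).1 ^ (n+1) = (0 : A × B).1
          show (0 : A) ^ (n + 1) = 0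
          exact zero_pow (Nat.succ_ne_zero n)
        · show ((s * s) * ((p * q).coeff k : B)) ^ (n + 1) = 0
          have hc : Commute (s * s) ((p * q).coeff k : B) :=
            Commute.mul_left (hcomm _) (hcomm _)
          rw [hc.mul_pow, hn', mul_zero]
      -- apply nil-Armendariz of the amalgamation
      obtain ⟨n, hn⟩ := hR P Q hnil i j
      rw [hPc, hQc, key] at hn
      have hn2 := congrArg (Subtype.val) hn
      push_cast at hn2
      rw [hθcoe] at hn2
      have hc : Commute (s * s) ((p.coeff i : B) * (q.coeff j : B)) :=
        Commute.mul_left (hcomm _) (hcomm _)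
      have hss' : (s * s) ^ n = s ^ n * s ^ n := (Commute.refl s).mul_pow n
      have hsnd : s ^ n * (s ^ n * ((p.coeff i : B) * (q.coeff j : B)) ^ n) = 0 := by
        have h3 := congrArg Prod.snd hn2
        rw [Prod.pow_snd, hc.mul_pow, hss', mul_assoc] at h3
        simpa using h3
      have hd : ((p.coeff i : B) * (q.coeff j : B)) ^ n = 0 :=
        cancel n _ (cancel n _ hsnd)
      rw [aux_subring_isNilpotent_iff]
      refine ⟨n, ?_⟩
      push_cast
      exact hd
  · rintro ⟨hA, hS⟩
    refine aux_isNilArmendariz_of_injective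
      ({ toFun := fun x => ((x : A × B).1,
            ⟨(x : A × B).2, (aux_mem_imageAddIdeal f J _).mpr ⟨(x : A × B).1, x.2⟩⟩)
         map_one' := rfl
         map_mul' := fun _ _ => rfl
         map_zero' := rfl
         map_add' := fun _ _ => rfl }
        : amalgamation f J →+* A × (imageAddIdeal f J)) (fun x y hxy => ?_)
      (aux_isNilArmendariz_prod hA hS)
    refine Subtype.ext (Prod.ext ?_ ?_)
    · exact congrArg (fun z : A × (imageAddIdeal f J) => z.1) hxy
    · exact congrArg (fun z : A × (imageAddIdeal f J) => (z.2 : B)) hxy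
end

section
/- Let A and B be associative rings with identity, f : A → B a ring homomorphism, and J a proper two-sided ideal of B. Assume f⁻¹(J) ⊆ nil(A), i.e., every element of A mapped into J by f is nilpotent. Then the amalgamation A⋈fJ is a nil-Armendariz ring if and only if the subring f(A)+J of B is a nil-Armendariz ring. -/
open Polynomial

section Aux

variable {A B : Type*} [Ring A] [Ring B] (f : A →+* B) (J : TwoSidedIdeal B)

lemma isNilpotent_subtype_iff {R : Type*} [Ring R] {S : Subring R} (x : S) :
    IsNilpotent x ↔ IsNilpotent (x : R) := by
  constructor
  · rintro ⟨n, hn⟩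
    exact ⟨n, by rw [← SubmonoidClass.coe_pow, hn]; rfl⟩
  · rintro ⟨n, hn⟩
    exact ⟨n, by ext; rw [SubmonoidClass.coe_pow, hn]; rfl⟩

lemma pow_sub_pow_mem (b c : B) (h : b - c ∈ J) : ∀ n : ℕ, b ^ n - c ^ n ∈ J
  | 0 => by simp [J.zero_mem]
  | n + 1 => by
    have e : b ^ (n + 1) - c ^ (n + 1) = b * (b ^ n - c ^ n) + (b - c) * c ^ n := by
      simp only [pow_succ', mul_sub, sub_mul]; abel
    rw [e]
    exact J.add_mem (J.mul_mem_left _ _ (pow_sub_pow_mem b c h n)) (J.mul_mem_right _ _ h)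

/-- The second projection, as a ring hom from the amalgamation to `f(A)+J`. -/
def proj2 : amalgamation f J →+* imageAddIdeal f J where
  toFun x := ⟨(x : A × B).2, (x : A × B).1, x.property⟩
  map_one' := rfl
  map_mul' _ _ := rfl
  map_zero' := rfl
  map_add' _ _ := rfl

@[simp] lemma coe_proj2 (x : amalgamation f J) : (proj2 f J x : B) = (x : A × B).2 := rfl

lemma nilp_of_proj2 (h : ∀ a : A, f a ∈ J → IsNilpotent a) (x : amalgamation f J)
    (hx : IsNilpotent ((x : A × B).2)) : IsNilpotent x := by
  obtain ⟨n, hn⟩ := hx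
  have hmem : (x : A × B).2 - f (x : A × B).1 ∈ J := x.property
  have h1 : f ((x : A × B).1) ^ n - (x : A × B).2 ^ n ∈ J :=
    pow_sub_pow_mem J _ _ (by simpa using J.neg_mem hmem) n
  rw [hn, sub_zero, ← map_pow] at h1
  obtain ⟨m, hm⟩ := h _ h1
  refine ⟨n * m + n, ?_⟩
  have hfst : (x : A × B).1 ^ (n * m + n) = 0 := by
    rw [pow_add, pow_mul, hm, zero_mul]
  have hsnd : (x : A × B).2 ^ (n * m + n) = 0 := by
    rw [pow_add, hn, mul_zero]
  have hx : ((x : A × B)) ^ (n * m + n) = 0 := by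
    rw [Prod.pow_def, hfst, hsnd]; rfl
  apply Subtype.ext
  rw [SubmonoidClass.coe_pow]
  simpa using hx

/-- A section of `proj2`, sending `0` to `0`. -/
noncomputable def sec (s : imageAddIdeal f J) : amalgamation f J :=
  letI := Classical.dec ((s : B) = 0)
  if (s : B) = 0 then 0
  else ⟨(s.property.choose, (s : B)), s.property.choose_spec⟩

@[simp] lemma sec_zero : sec f J 0 = 0 := by simp [sec]

@[simp] lemma proj2_sec (s : imageAddIdeal f J) : proj2 f J (sec f J s) = s := by
  classical
  rw [sec]
  split_ifs with hs
  · rw [map_zero]; ext; exact hs.symm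
  · rfl

/-- Coefficientwise lift of a polynomial along `sec`. -/
noncomputable def liftPoly (p : (imageAddIdeal f J)[X]) : (amalgamation f J)[X] :=
  ⟨⟨p.toFinsupp.coeff.mapRange (sec f J) (sec_zero f J)⟩⟩

@[simp] lemma liftPoly_coeff (p : (imageAddIdeal f J)[X]) (n : ℕ) :
    (liftPoly f J p).coeff n = sec f J (p.coeff n) := by
  simp [liftPoly, Polynomial.coeff, Finsupp.mapRange_apply]

@[simp] lemma map_liftPoly (p : (imageAddIdeal f J)[X]) :
    (liftPoly f J p).map (proj2 f J) = p := by
  ext n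
  rw [Polynomial.coeff_map, liftPoly_coeff, proj2_sec]

end Aux

theorem stmt_9 {A B : Type*} [Ring A] [Ring B] (f : A →+* B) (J : TwoSidedIdeal B)
    (hJ : (1 : B) ∉ J)
    (h : ∀ a : A, f a ∈ J → IsNilpotent a) :
    IsNilArmendariz (amalgamation f J) ↔ IsNilArmendariz (imageAddIdeal f J) := by
  constructor
  · -- R nil-Armendariz → S nil-Armendariz
    intro hR p q hpq i j
    set P := liftPoly f J p with hP
    set Q := liftPoly f J q with hQ
    have hmap : (P * Q).map (proj2 f J) = p * q := by
      rw [Polynomial.map_mul, map_liftPoly, map_liftPoly]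
    have hcoeffs : ∀ k : ℕ, IsNilpotent ((P * Q).coeff k) := by
      intro k
      apply nilp_of_proj2 f J h
      rw [← coe_proj2]
      rw [← (isNilpotent_subtype_iff _)]
      have : proj2 f J ((P * Q).coeff k) = (p * q).coeff k := by
        rw [← Polynomial.coeff_map, hmap]
      rw [this]
      exact hpq k
    have hnil := hR P Q hcoeffs i j
    have := hnil.map (proj2 f J)
    rwa [map_mul, hP, hQ, liftPoly_coeff, liftPoly_coeff, proj2_sec, proj2_sec] at this
  · -- S nil-Armendariz → R nil-Armendariz
    intro hS p q hpq i j
    set P := p.map (proj2 f J) with hP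
    set Q := q.map (proj2 f J) with hQ
    have hcoeffs : ∀ k : ℕ, IsNilpotent ((P * Q).coeff k) := by
      intro k
      rw [hP, hQ, ← Polynomial.map_mul, Polynomial.coeff_map]
      exact (hpq k).map (proj2 f J)
    have hnil := hS P Q hcoeffs i j
    rw [hP, hQ, Polynomial.coeff_map, Polynomial.coeff_map, ← map_mul] at hnil
    apply nilp_of_proj2 f J h
    rw [← coe_proj2, ← isNilpotent_subtype_iff]
    exact hnil
end
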